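/- Let t ≥ 1 be an integer, let u ≥ 0 be a real with (2t+1)·u < 1, let d_1, …, d_t ∈ {0,1}, and let ε_1, …, ε_t and ε'_1, …, ε'_t be reals of absolute value at most u. Define p_1 = (1/2)(1+ε_1) and p_i = (p_{i−1}/2)(1+ε_i) for 2 ≤ i ≤ t; define s_0 = 0 and, for 1 ≤ i ≤ t, s_i = s_{i−1} if d_i = 0 and s_i = (s_{i−1} + p_i)(1+ε'_i) if d_i = 1. Then there exists a real θ with |θ| ≤ γ_{2t+1} such that s_t = (∑_{i=1}^t d_i·2^{−i})(1+θ). -/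

import Mathlib

set_option maxHeartbeats 1000000

/-- Finite-precision evaluation of a binary mantissa `m = 0.d₁d₂…d_t` (proof
of Proposition `grid`): each power `2^{−i}` is obtained from `2^{−(i−1)}` by
one division, and added to the partial sum when `dᵢ = 1`, every operation
incurring a relative rounding error of magnitude at most `u`; the computed
mantissa equals the exact one up to relative error `γ_{2t+1}`. -/
theorem mantissa_evaluation (t : ℕ) (ht : 1 ≤ t) (u : ℝ) (hu : 0 ≤ u)
    (htu : (2 * (t : ℝ) + 1) * u < 1)
    (d : ℕ → ℝ) (hd : ∀ i, 1 ≤ i → i ≤ t → d i = 0 ∨ d i = 1)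
    (ε ε' : ℕ → ℝ)
    (hε : ∀ i, 1 ≤ i → i ≤ t → |ε i| ≤ u)
    (hε' : ∀ i, 1 ≤ i → i ≤ t → |ε' i| ≤ u)
    (p s : ℕ → ℝ)
    (hp1 : p 1 = (1 / 2) * (1 + ε 1))
    (hpi : ∀ i, 2 ≤ i → i ≤ t → p i = (p (i - 1) / 2) * (1 + ε i))
    (hs0 : s 0 = 0)
    (hsi : ∀ i, 1 ≤ i → i ≤ t →
      (d i = 0 → s i = s (i - 1)) ∧
      (d i = 1 → s i = (s (i - 1) + p i) * (1 + ε' i))) :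
    ∃ θ : ℝ,
      |θ| ≤ (2 * (t : ℝ) + 1) * u / (1 - (2 * (t : ℝ) + 1) * u) ∧
      s t = (∑ i ∈ Finset.Icc 1 t, d i * (2 : ℝ) ^ (-(i : ℤ))) * (1 + θ) := by
  have htR : (1:ℝ) ≤ (t:ℝ) := by exact_mod_cast ht
  have hu1 : u < 1 := by nlinarith
  set a : ℝ := 1 - u with ha
  set b : ℝ := 1 + u with hb
  have ha0 : 0 ≤ a := by simp [ha]; linarith
  have ha1 : a ≤ 1 := by simp [ha]; linarith
  have hb1 : 1 ≤ b := by simp [hb]; linarith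
  have hb0 : 0 ≤ b := by linarith
  have hhalf : ∀ i : ℕ, (2:ℝ) ^ (-(i:ℤ)) = (1/2:ℝ) ^ i := by
    intro i
    rw [zpow_neg, zpow_natCast, one_div, inv_pow]
  -- bounds on p
  have hpA : ∀ i, 1 ≤ i → i ≤ t →
      (1/2:ℝ)^i * a^i ≤ p i ∧ p i ≤ (1/2:ℝ)^i * b^i := by
    intro i hi1
    induction i, hi1 using Nat.le_induction with
    | base =>
      intro h1t
      obtain ⟨he1, he2⟩ := abs_le.mp (hε 1 le_rfl h1t)
      rw [hp1]
      constructor <;> nlinarith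
    | succ i hi IH =>
      intro hit
      have hit' : i ≤ t := by omega
      obtain ⟨hl, hr⟩ := IH hit'
      have hp := hpi (i+1) (by omega) hit
      simp only [Nat.add_sub_cancel] at hp
      obtain ⟨he1, he2⟩ := abs_le.mp (hε (i+1) (by omega) hit)
      have hp0 : (0:ℝ) ≤ (1/2:ℝ)^i * a^i := by positivity
      have hpnn : 0 ≤ p i := le_trans hp0 hl
      constructor
      · rw [hp, pow_succ, pow_succ]
        have h1 : (1/2:ℝ)^i * a^i * a ≤ p i * (1 + ε (i+1)) :=
          mul_le_mul hl (by linarith) ha0 hpnn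
        nlinarith
      · rw [hp, pow_succ, pow_succ]
        have h1 : p i * (1 + ε (i+1)) ≤ (1/2:ℝ)^i * b^i * b :=
          mul_le_mul hr (by linarith) (by linarith) (by positivity)
        nlinarith
  -- partial sums
  set S : ℕ → ℝ := fun i => ∑ j ∈ Finset.Icc 1 i, d j * (1/2:ℝ)^j with hS
  have hSnn : ∀ i, i ≤ t → 0 ≤ S i := by
    intro i hi
    apply Finset.sum_nonneg
    intro j hj
    rw [Finset.mem_Icc] at hj
    rcases hd j hj.1 (le_trans hj.2 hi) with h | h <;> rw [h] <;> positivity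
  have hB : ∀ i, i ≤ t → S i * a^(2*i) ≤ s i ∧ s i ≤ S i * b^(2*i) := by
    intro i
    induction i with
    | zero => intro _; simp [hS, hs0]
    | succ i IH =>
      intro hit
      have hit' : i ≤ t := by omega
      obtain ⟨hl, hr⟩ := IH hit'
      have hSi : 0 ≤ S i := hSnn i hit'
      have hSsucc : S (i+1) = S i + d (i+1) * (1/2:ℝ)^(i+1) := by
        rw [hS]
        exact Finset.sum_Icc_succ_top (by omega) _
      have hexp : 2*(i+1) = (2*i+1)+1 := by ring
      obtain ⟨hsl, hsr⟩ := hsi (i+1) (by omega) hit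
      rcases hd (i+1) (by omega) hit with h0 | h1
      · -- d (i+1) = 0
        have hs : s (i+1) = s i := hsl h0
        have hSe : S (i+1) = S i := by rw [hSsucc, h0]; ring
        have e1 : a^(2*(i+1)) ≤ a^(2*i) := pow_le_pow_of_le_one ha0 ha1 (by omega)
        have e2 : b^(2*i) ≤ b^(2*(i+1)) := pow_le_pow_right₀ hb1 (by omega)
        rw [hs, hSe]
        constructor
        · exact le_trans (mul_le_mul_of_nonneg_left e1 hSi) hl
        · exact le_trans hr (mul_le_mul_of_nonneg_left e2 hSi)
      · -- d (i+1) = 1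
        have hs : s (i+1) = (s i + p (i+1)) * (1 + ε' (i+1)) := hsr h1
        have hSe : S (i+1) = S i + (1/2:ℝ)^(i+1) := by rw [hSsucc, h1]; ring
        obtain ⟨hpl, hpr⟩ := hpA (i+1) (by omega) hit
        obtain ⟨he1, he2⟩ := abs_le.mp (hε' (i+1) (by omega) hit)
        have hsnn : 0 ≤ s i := le_trans (by positivity) hl
        have hpnn : 0 ≤ p (i+1) := le_trans (by positivity) hpl
        have ea1 : a^(2*i+1) ≤ a^(2*i) := pow_le_pow_of_le_one ha0 ha1 (by omega)
        have ea2 : a^(2*i+1) ≤ a^(i+1) := pow_le_pow_of_le_one ha0 ha1 (by omega)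
        have eb1 : b^(2*i) ≤ b^(2*i+1) := pow_le_pow_right₀ hb1 (by omega)
        have eb2 : b^(i+1) ≤ b^(2*i+1) := pow_le_pow_right₀ hb1 (by omega)
        have hub : s i + p (i+1) ≤ (S i + (1/2:ℝ)^(i+1)) * b^(2*i+1) := by
          have g1 : S i * b^(2*i) ≤ S i * b^(2*i+1) := mul_le_mul_of_nonneg_left eb1 hSi
          have g2 : (1/2:ℝ)^(i+1) * b^(i+1) ≤ (1/2:ℝ)^(i+1) * b^(2*i+1) :=
            mul_le_mul_of_nonneg_left eb2 (by positivity)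
          rw [add_mul]
          linarith
        have hlb : (S i + (1/2:ℝ)^(i+1)) * a^(2*i+1) ≤ s i + p (i+1) := by
          have g1 : S i * a^(2*i+1) ≤ S i * a^(2*i) := mul_le_mul_of_nonneg_left ea1 hSi
          have g2 : (1/2:ℝ)^(i+1) * a^(2*i+1) ≤ (1/2:ℝ)^(i+1) * a^(i+1) :=
            mul_le_mul_of_nonneg_left ea2 (by positivity)
          rw [add_mul]
          linarith
        rw [hs, hSe]
        have key1 : (S i + (1/2:ℝ)^(i+1)) * a^(2*i+1) * a ≤
            (s i + p (i+1)) * (1 + ε' (i+1)) :=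
          mul_le_mul hlb (show a ≤ 1 + ε' (i+1) by simp only [ha]; linarith)
            ha0 (by linarith)
        have key2 : (s i + p (i+1)) * (1 + ε' (i+1)) ≤
            (S i + (1/2:ℝ)^(i+1)) * b^(2*i+1) * b :=
          mul_le_mul hub (show 1 + ε' (i+1) ≤ b by simp only [hb]; linarith)
            (by linarith) (by positivity)
        have ea : (S i + (1/2:ℝ)^(i+1)) * a^(2*(i+1)) =
            (S i + (1/2:ℝ)^(i+1)) * a^(2*i+1) * a := by
          rw [hexp, pow_succ]; ring
        have eb : (S i + (1/2:ℝ)^(i+1)) * b^(2*(i+1)) =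
            (S i + (1/2:ℝ)^(i+1)) * b^(2*i+1) * b := by
          rw [hexp, pow_succ]; ring
        rw [ea, eb]
        exact ⟨key1, key2⟩
  -- conclude
  obtain ⟨hfl, hfr⟩ := hB t le_rfl
  have hSt : 0 ≤ S t := hSnn t le_rfl
  set ν : ℝ := (2 * (t:ℝ) + 1) * u with hν
  have hν0 : 0 ≤ ν := by positivity
  have hν1 : 0 < 1 - ν := by linarith
  have hγ0 : 0 ≤ ν / (1 - ν) := div_nonneg hν0 (le_of_lt hν1)
  have hsum : (∑ i ∈ Finset.Icc 1 t, d i * (2:ℝ) ^ (-(i:ℤ))) = S t := by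
    apply Finset.sum_congr rfl
    intro i _
    rw [hhalf]
  rcases eq_or_lt_of_le hSt with hS0 | hSpos
  · refine ⟨0, by simpa using hγ0, ?_⟩
    rw [hsum, ← hS0]
    have h1 : s t ≤ 0 := by simpa [← hS0] using hfr
    have h2 : 0 ≤ s t := by simpa [← hS0] using hfl
    simp
    linarith
  · refine ⟨s t / S t - 1, ?_, ?_⟩
    · -- bound on |θ|
      have hθu : s t / S t ≤ b^(2*t) := by
        rw [div_le_iff₀ hSpos]
        linarith [hfr]
      have hθl : a^(2*t) ≤ s t / S t := by
        rw [le_div_iff₀ hSpos]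
        linarith [hfl]
      -- Bernoulli bounds
      have hber : 1 - (2*(t:ℝ)+1) * u ≤ a^(2*t+1) := by
        have := one_add_mul_le_pow (show (-2:ℝ) ≤ -u by linarith) (2*t+1)
        have h2 : (1:ℝ) + (2*t+1 : ℕ) * (-u) ≤ a^(2*t+1) := by
          rw [ha, sub_eq_add_neg]; exact this
        push_cast at h2
        linarith
      have hber2 : 1 - 2*(t:ℝ) * u ≤ a^(2*t) := by
        have := one_add_mul_le_pow (show (-2:ℝ) ≤ -u by linarith) (2*t)
        have h2 : (1:ℝ) + (2*t : ℕ) * (-u) ≤ a^(2*t) := by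
          rw [ha, sub_eq_add_neg]; exact this
        push_cast at h2
        linarith
      have hab : b^(2*t) * a^(2*t) ≤ 1 := by
        have h1 : b * a = 1 - u^2 := by rw [ha, hb]; ring
        have h2 : b^(2*t) * a^(2*t) = (1 - u^2)^(2*t) := by
          rw [← mul_pow, h1]
        rw [h2]
        exact pow_le_one₀ (by nlinarith) (by nlinarith)
      have hbub : b^(2*t) * (1 - ν) ≤ 1 := by
        have h1 : b^(2*t) * (1 - ν) ≤ b^(2*t) * a^(2*t+1) := by
          apply mul_le_mul_of_nonneg_left _ (pow_nonneg hb0 _)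
          rw [hν]; exact hber
        have h2 : b^(2*t) * a^(2*t+1) = (b^(2*t) * a^(2*t)) * a := by
          rw [pow_succ]; ring
        nlinarith [pow_nonneg hb0 (2*t), pow_nonneg ha0 (2*t)]
      have hup : b^(2*t) - 1 ≤ ν / (1 - ν) := by
        rw [le_div_iff₀ hν1]
        nlinarith
      have hlo : 1 - a^(2*t) ≤ ν / (1 - ν) := by
        have h1 : 1 - a^(2*t) ≤ ν := by rw [hν]; nlinarith
        have h2 : ν ≤ ν / (1 - ν) := by
          rw [le_div_iff₀ hν1]
          nlinarith
        linarith
      rw [abs_le]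
      constructor
      · linarith
      · linarith
    · rw [hsum]
      have hne : S t ≠ 0 := ne_of_gt hSpos
      field_simp
      ring
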